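/- With P, D, F̄, the power series roots φ_1, …, φ_D, and α_i := φ_i(0, 0) as in the setup, fix any k ≥ 0 and for S ⊆ {1, …, D} let Q_S(T, x, z) := (∏_{i∈S} (z − φ_i(T, x))) trunc T^k. If the univariate polynomial g_S(z) := ∏_{i∈S} (z − α_i) = Q_S(0, 0, z) has all its coefficients in the base field F, then Q_S(T, x, z) has all its coefficients in F, i.e., Q_S ∈ F[T, x, z]. -/

import Mathlib

/-!
Lemma `coefficients-of-QS-polynomial`: if the univariate projection of `Q_S` has
all its coefficients in the base field `F`, then so does `Q_S` itself, i.e.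
`Q_S ∈ F[T, x, z]`.

`P ∈ F[T, x, z]` is represented as `Polynomial (Polynomial (MvPolynomial (Fin n) F))`,
with `z` the outer variable and `T` the inner one.  `F̄[x][[T]][z]` is
`Polynomial (PowerSeries (MvPolynomial (Fin n) (AlgebraicClosure F)))`.
-/

noncomputable section

namespace QSaux
open Polynomial PowerSeries

variable {A : Type*} [CommSemiring A]

def slice (m : ℕ) (q : Polynomial (PowerSeries A)) : Polynomial A :=
  ⟨AddMonoidAlgebra.ofCoeff (Finsupp.mapRange (PowerSeries.coeff m) (map_zero _) q.toFinsupp.coeff)⟩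

@[simp] lemma coeff_slice (m : ℕ) (q : Polynomial (PowerSeries A)) (j : ℕ) :
    (slice m q).coeff j = PowerSeries.coeff m (q.coeff j) := by
  rcases q with ⟨q⟩
  simp [slice, Polynomial.coeff]

lemma slice_zero (q : Polynomial (PowerSeries A)) :
    slice 0 q = q.map (PowerSeries.constantCoeff (R := A)) := by
  ext j
  simp [PowerSeries.coeff_zero_eq_constantCoeff]

lemma slice_mul (m : ℕ) (p q : Polynomial (PowerSeries A)) :
    slice m (p * q) = ∑ ab ∈ Finset.HasAntidiagonal.antidiagonal m, slice ab.1 p * slice ab.2 q := by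
  ext j
  rw [Polynomial.finset_sum_coeff]
  simp only [coeff_slice, Polynomial.coeff_mul, map_sum, PowerSeries.coeff_mul]
  rw [Finset.sum_comm]

end QSaux


/-- `F̄[x]`. -/
abbrev MvK (F : Type*) [Field F] (n : ℕ) := MvPolynomial (Fin n) (AlgebraicClosure F)

/-- Coefficient extension `F[T, x, z] → F̄[T, x, z]`. -/
def liftTXZ (F : Type*) [Field F] (n : ℕ) :
    Polynomial (Polynomial (MvPolynomial (Fin n) F)) →+* Polynomial (Polynomial (MvK F n)) :=
  Polynomial.mapRingHom (Polynomial.mapRingHom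
    (MvPolynomial.map (algebraMap F (AlgebraicClosure F))))

/-- Inclusion `F̄[T, x, z] = F̄[x][T][z] → F̄[x][[T]][z]`. -/
def liftPS (F : Type*) [Field F] (n : ℕ) :
    Polynomial (Polynomial (MvK F n)) →+* Polynomial (PowerSeries (MvK F n)) :=
  Polynomial.mapRingHom (Polynomial.coeToPowerSeries.ringHom)

/-- Coefficientwise truncation `trunc T^k : F̄[x][[T]][z] → F̄[x][T][z]`. -/
def truncPow {A : Type*} [CommSemiring A] (k : ℕ) (q : Polynomial (PowerSeries A)) :
    Polynomial (Polynomial A) :=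
  ∑ j ∈ q.support, Polynomial.monomial j (PowerSeries.trunc k (q.coeff j))


lemma coeff_truncPow {A : Type*} [CommSemiring A] (k : ℕ) (q : Polynomial (PowerSeries A))
    (j : ℕ) : (truncPow k q).coeff j = PowerSeries.trunc k (q.coeff j) := by
  rw [truncPow, Polynomial.finset_sum_coeff]
  simp only [Polynomial.coeff_monomial]
  rw [Finset.sum_ite_eq' q.support j fun i => PowerSeries.trunc k (q.coeff i)]
  by_cases h : j ∈ q.support
  · rw [if_pos h]
  · rw [if_neg h]
    rw [Polynomial.notMem_support_iff.mp h, map_zero]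

open Polynomial QSaux in
theorem stmt_7 {F : Type*} [Field F] {n : ℕ}
    (P : Polynomial (Polynomial (MvPolynomial (Fin n) F)))
    (hP0 : P ≠ 0) (hsqf : Squarefree P)
    -- `P` is monic in `z`:
    (hmonic : ∃ c : F, c ≠ 0 ∧ P.leadingCoeff = Polynomial.C (MvPolynomial.C c))
    -- `P(0, x, z) = P(0, 0, z) ∈ F[z]` (this is `T`-regularity) and it is squarefree:
    (p₀ : Polynomial F)
    (hreg : P.map (Polynomial.evalRingHom (0 : MvPolynomial (Fin n) F)) =
      p₀.map (MvPolynomial.C : F →+* MvPolynomial (Fin n) F))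
    (hp₀sqf : Squarefree p₀)
    -- `P = ∏ (z − φ_i)` in `F̄[x][[T]][z]`, with `D = deg_z P`:
    (D : ℕ) (hD : D = P.natDegree)
    (φ : Fin D → PowerSeries (MvK F n))
    (hfact : liftPS F n (liftTXZ F n P) =
      ∏ i : Fin D, (Polynomial.X - Polynomial.C (φ i)))
    -- `α_i = φ_i(0, 0)`:
    (α : Fin D → AlgebraicClosure F)
    (hα : ∀ i, α i = MvPolynomial.eval (0 : Fin n → AlgebraicClosure F)
      (PowerSeries.constantCoeff (φ i)))
    (k : ℕ) (S : Finset (Fin D))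
    -- all coefficients of `g_S(z) = ∏_{i ∈ S} (z − α_i)` lie in `F`:
    (hgS : ∀ j : ℕ, (∏ i ∈ S, (Polynomial.X - Polynomial.C (α i))).coeff j ∈
      (algebraMap F (AlgebraicClosure F)).range) :
    -- then `Q_S = (∏_{i ∈ S} (z − φ_i)) trunc T^k` has all its coefficients in `F`:
    ∃ Q' : Polynomial (Polynomial (MvPolynomial (Fin n) F)),
      liftTXZ F n Q' = truncPow (A := MvK F n) k (∏ i ∈ S, (Polynomial.X - Polynomial.C (φ i))) := by
  classical
  set alg : F →+* AlgebraicClosure F := algebraMap F (AlgebraicClosure F) with halg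
  set σ : MvPolynomial (Fin n) F →+* MvK F n := MvPolynomial.map alg with hσ
  have hσinj : Function.Injective σ := MvPolynomial.map_injective alg alg.injective
  set QS : Polynomial (PowerSeries (MvK F n)) := ∏ i ∈ S, (X - C (φ i)) with hQS
  set QSc : Polynomial (PowerSeries (MvK F n)) := ∏ i ∈ Sᶜ, (X - C (φ i)) with hQSc
  have hQQ : QS * QSc = liftPS F n (liftTXZ F n P) := by
    rw [hfact, hQS, hQSc, Finset.prod_mul_prod_compl]
  set ψ : Fin D → MvK F n := fun i => PowerSeries.constantCoeff (R := MvK F n) (φ i) with hψ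
  set CK : AlgebraicClosure F →+* MvK F n := MvPolynomial.C with hCK
  -- step (*) : p₀ mapped into (MvK F n)[z] equals ∏ (X - C ψ i)
  have hcomp1 : ((PowerSeries.constantCoeff (R := MvK F n)).comp
      Polynomial.coeToPowerSeries.ringHom).comp (Polynomial.mapRingHom σ)
      = σ.comp (Polynomial.evalRingHom (0 : MvPolynomial (Fin n) F)) := by
    apply RingHom.ext; intro q
    simp only [RingHom.comp_apply, coe_mapRingHom, Polynomial.coeToPowerSeries.ringHom_apply,
      Polynomial.constantCoeff_coe, Polynomial.coeff_map, coe_evalRingHom,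
      ← Polynomial.coeff_zero_eq_eval_zero]
  have hcomp2 : σ.comp (MvPolynomial.C : F →+* MvPolynomial (Fin n) F) = CK.comp alg := by
    apply RingHom.ext; intro c
    simp [hσ, hCK, MvPolynomial.map_C]
  have hstar : p₀.map (CK.comp alg) = ∏ i : Fin D, (X - C (ψ i)) := by
    have h1 := congrArg (Polynomial.map (PowerSeries.constantCoeff (R := MvK F n))) hfact
    rw [Polynomial.map_prod] at h1
    simp only [Polynomial.map_sub, Polynomial.map_X, Polynomial.map_C] at h1
    rw [liftPS, liftTXZ, coe_mapRingHom, coe_mapRingHom,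
      show (MvPolynomial.map (algebraMap F (AlgebraicClosure F))) = σ from rfl,
      Polynomial.map_map, Polynomial.map_map, hcomp1, ← Polynomial.map_map, hreg,
      Polynomial.map_map, hcomp2] at h1
    exact h1
  -- step (**) : p₀ mapped into K[z] equals ∏ (X - C α i)
  have hstar2 : p₀.map alg = ∏ i : Fin D, (X - C (α i)) := by
    have h2 := congrArg (Polynomial.map
      ((MvPolynomial.eval (0 : Fin n → AlgebraicClosure F)) :
        MvK F n →+* AlgebraicClosure F)) hstar
    rw [Polynomial.map_prod, Polynomial.map_map] at h2
    simp only [Polynomial.map_sub, Polynomial.map_X, Polynomial.map_C] at h2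
    rw [show ((MvPolynomial.eval (0 : Fin n → AlgebraicClosure F)) :
        MvK F n →+* AlgebraicClosure F).comp (CK.comp alg) = alg from
      RingHom.ext fun c => by simp [hCK]] at h2
    simp only [hψ] at h2
    simp only [← hα] at h2
    exact h2
  -- (†) : ψ i = C (α i)
  have hpsi : ∀ i, ψ i = CK (α i) := by
    have h3 : ∏ j : Fin D, (X - C (ψ j)) = ∏ j : Fin D, (X - C (CK (α j))) := by
      rw [← hstar, show p₀.map (CK.comp alg) = (p₀.map alg).map CK from
        (Polynomial.map_map _ _ _).symm, hstar2, Polynomial.map_prod]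
      simp only [Polynomial.map_sub, Polynomial.map_X, Polynomial.map_C]
    intro i
    have h4 := congrArg (Polynomial.eval (ψ i)) h3
    rw [Polynomial.eval_prod, Polynomial.eval_prod] at h4
    simp only [Polynomial.eval_sub, Polynomial.eval_X, Polynomial.eval_C] at h4
    rw [Finset.prod_eq_zero (Finset.mem_univ i) (by simp)] at h4
    obtain ⟨j, -, hj⟩ := Finset.prod_eq_zero_iff.mp h4.symm
    have hij : ψ i = CK (α j) := by
      have := sub_eq_zero.mp hj
      exact this
    have haij : α i = α j := by
      have := congrArg (MvPolynomial.eval (0 : Fin n → AlgebraicClosure F)) hij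
      rw [hα i] at *
      simp only [hψ] at hij this ⊢
      simpa [MvPolynomial.eval_C, hCK] using this
    rw [hij, haij]
  -- the univariate factors over the algebraic closure
  set gSa : Polynomial (AlgebraicClosure F) := ∏ i ∈ S, (X - C (α i)) with hgSa
  set gSca : Polynomial (AlgebraicClosure F) := ∏ i ∈ Sᶜ, (X - C (α i)) with hgSca
  have hsplit : p₀.map alg = gSa * gSca := by
    rw [hstar2, hgSa, hgSca, Finset.prod_mul_prod_compl]
  have hgSamonic : gSa.Monic := monic_prod_of_monic _ _ fun i _ => monic_X_sub_C _
  have hgScamonic : gSca.Monic := monic_prod_of_monic _ _ fun i _ => monic_X_sub_C _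
  -- descend g_S to F
  obtain ⟨gS', hgS'⟩ : ∃ q : Polynomial F, q.map alg = gSa := by
    rw [← Polynomial.mem_lifts]
    refine (Polynomial.lifts_iff_coeff_lifts _).mpr fun j => ?_
    obtain ⟨c, hc⟩ := hgS j
    exact ⟨c, hc⟩
  have hgS'monic : gS'.Monic := Polynomial.monic_of_injective alg.injective
    (by rw [hgS']; exact hgSamonic)
  -- descend g_{S^c} to F
  have hdvd0 : gS' ∣ p₀ := by
    rw [← Polynomial.map_dvd_map alg alg.injective hgS'monic, hgS', hsplit]
    exact Dvd.intro _ rfl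
  obtain ⟨gSc', hp₀eq⟩ := hdvd0
  have hgSc' : gSc'.map alg = gSca := by
    have h5 : gSa * (gSc'.map alg) = gSa * gSca := by
      rw [← hsplit, hp₀eq, Polynomial.map_mul, hgS']
    exact mul_left_cancel₀ hgSamonic.ne_zero h5
  -- coprimality over F
  have hcop : IsCoprime gS' gSc' := by
    rw [← EuclideanDomain.gcd_isUnit_iff]
    apply hp₀sqf
    rw [hp₀eq]
    exact mul_dvd_mul (EuclideanDomain.gcd_dvd_left _ _) (EuclideanDomain.gcd_dvd_right _ _)
  obtain ⟨v, u, huv⟩ := id hcop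
  -- transport to coefficient rings
  set gR := gS'.map (MvPolynomial.C : F →+* MvPolynomial (Fin n) F) with hgR
  set hR := gSc'.map (MvPolynomial.C : F →+* MvPolynomial (Fin n) F) with hhR
  set g := gSa.map CK with hg
  set h := gSca.map CK with hh
  have hmapg : gR.map σ = g := by
    rw [hgR, Polynomial.map_map, hcomp2, ← Polynomial.map_map, hgS', hg]
  have hmaph : hR.map σ = h := by
    rw [hhR, Polynomial.map_map, hcomp2, ← Polynomial.map_map, hgSc', hh]
  have hgRmonic : gR.Monic := hgS'monic.map _
  have hgmonic : g.Monic := hgSamonic.map _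
  have hslice0S : slice 0 QS = g := by
    rw [slice_zero, hQS, Polynomial.map_prod, hg, hgSa, Polynomial.map_prod]
    refine Finset.prod_congr rfl fun i _ => ?_
    simp only [Polynomial.map_sub, Polynomial.map_X, Polynomial.map_C]
    rw [show (PowerSeries.constantCoeff (R := MvK F n)) (φ i) = ψ i from rfl, hpsi i]
  have hslice0Sc : slice 0 QSc = h := by
    rw [slice_zero, hQSc, Polynomial.map_prod, hh, hgSca, Polynomial.map_prod]
    refine Finset.prod_congr rfl fun i _ => ?_
    simp only [Polynomial.map_sub, Polynomial.map_X, Polynomial.map_C]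
    rw [show (PowerSeries.constantCoeff (R := MvK F n)) (φ i) = ψ i from rfl, hpsi i]
  -- degrees
  have hdeggSa : gSa.degree = (S.card : ℕ) := by
    rw [hgSa, Polynomial.degree_prod]
    simp [Polynomial.degree_X_sub_C]
  have hgdeg : g.degree = (S.card : ℕ) := by
    rw [hg, Polynomial.degree_map_eq_of_injective (MvPolynomial.C_injective _ _), hdeggSa]
  have hgRdeg : gR.degree = (S.card : ℕ) := by
    rw [hgR, Polynomial.degree_map_eq_of_injective (MvPolynomial.C_injective _ _),
      show gS'.degree = gSa.degree from by
        rw [← hgS', Polynomial.degree_map_eq_of_injective alg.injective], hdeggSa]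
  have hQSmonic : QS.Monic := monic_prod_of_monic _ _ fun i _ => monic_X_sub_C _
  have hQSdeg : QS.natDegree = S.card := by
    rw [hQS, Polynomial.natDegree_prod _ _ fun i _ => (monic_X_sub_C (φ i)).ne_zero]
    simp [Polynomial.natDegree_X_sub_C]
  have hsliceSdeg : ∀ m : ℕ, 0 < m → (slice m QS).degree < (S.card : ℕ) := by
    intro m hm
    rw [Polynomial.degree_lt_iff_coeff_zero]
    intro j hj
    rw [coeff_slice]
    rcases lt_or_eq_of_le hj with hj' | hj'
    · rw [Polynomial.coeff_eq_zero_of_natDegree_lt (by omega), map_zero]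
    · rw [← hj', ← hQSdeg, hQSmonic.coeff_natDegree, PowerSeries.coeff_one,
        if_neg (by omega)]
  -- slices of the lift of P are rational
  have hliftP : ∀ m : ℕ, slice m (liftPS F n (liftTXZ F n P)) ∈ Polynomial.lifts σ := by
    intro m
    refine (Polynomial.lifts_iff_coeff_lifts _).mpr fun j => ?_
    rw [coeff_slice, liftPS, liftTXZ]
    simp only [coe_mapRingHom, Polynomial.coeff_map, Polynomial.coeToPowerSeries.ringHom_apply,
      Polynomial.coeff_coe, show (MvPolynomial.map (algebraMap F (AlgebraicClosure F))) = σ from rfl]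
    exact ⟨_, rfl⟩
  have claim : ∀ m : ℕ, QSaux.slice m QS ∈ Polynomial.lifts σ ∧
      QSaux.slice m QSc ∈ Polynomial.lifts σ := by
    intro m
    induction m using Nat.strong_induction_on with
    | _ m IH =>
      rcases Nat.eq_zero_or_pos m with rfl | hm
      · exact ⟨(Polynomial.mem_lifts _).mpr ⟨gR, by rw [hmapg, hslice0S]⟩,
          (Polynomial.mem_lifts _).mpr ⟨hR, by rw [hmaph, hslice0Sc]⟩⟩
      · have hkey := slice_mul m QS QSc
        rw [hQQ] at hkey
        have h0m : ((0 : ℕ), m) ∈ Finset.HasAntidiagonal.antidiagonal m := by simp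
        have hm0 : ((m : ℕ), 0) ∈ (Finset.HasAntidiagonal.antidiagonal m).erase (0, m) := by
          rw [Finset.mem_erase]
          constructor
          · intro hc
            rw [Prod.ext_iff] at hc
            omega
          · simp
        set rest := ∑ ab ∈ ((Finset.HasAntidiagonal.antidiagonal m).erase (0, m)).erase (m, 0),
          QSaux.slice ab.1 QS * QSaux.slice ab.2 QSc with hrestdef
        have hkey2 : QSaux.slice m (liftPS F n (liftTXZ F n P)) =
            g * QSaux.slice m QSc + QSaux.slice m QS * h + rest := by
          rw [hkey, ← Finset.add_sum_erase _ _ h0m, ← Finset.add_sum_erase _ _ hm0]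
          rw [hslice0S, hslice0Sc]
          ring
        have habs : ∀ ab ∈ ((Finset.HasAntidiagonal.antidiagonal m).erase (0, m)).erase (m, 0),
            ab.1 < m ∧ ab.2 < m := by
          intro ab hab
          rw [Finset.mem_erase, Finset.mem_erase, Finset.HasAntidiagonal.mem_antidiagonal] at hab
          obtain ⟨h1, h2, h3⟩ := hab
          rw [Ne, Prod.ext_iff] at h1 h2
          omega
        have hErest : rest ∈ Polynomial.lifts σ := by
          refine sum_mem fun ab hab => mul_mem ?_ ?_
          · exact (IH ab.1 (habs ab hab).1).1
          · exact (IH ab.2 (habs ab hab).2).2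
        obtain ⟨e1, he1⟩ := (Polynomial.mem_lifts _).mp (hliftP m)
        obtain ⟨e2, he2⟩ := (Polynomial.mem_lifts _).mp hErest
        set E' := e1 - e2 with hE'def
        have hE' : E'.map σ = QSaux.slice m (liftPS F n (liftTXZ F n P)) - rest := by
          rw [hE'def, Polynomial.map_sub, he1, he2]
        set uR := u.map (MvPolynomial.C : F →+* MvPolynomial (Fin n) F) with huR
        set vR := v.map (MvPolynomial.C : F →+* MvPolynomial (Fin n) F) with hvR
        have hid : vR * gR + uR * hR = 1 := by
          have h10 := congrArg (Polynomial.map (MvPolynomial.C : F →+* MvPolynomial (Fin n) F)) huv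
          rw [Polynomial.map_add, Polynomial.map_mul, Polynomial.map_mul, Polynomial.map_one] at h10
          exact h10
        set Araw := (uR * E') %ₘ gR with hAraw
        set qq := (uR * E') /ₘ gR with hqq
        have hmd := Polynomial.modByMonic_add_div (uR * E') gR
        set Braw := vR * E' + qq * hR with hBraw
        have hABraw : Araw * hR + gR * Braw = E' := by
          rw [hBraw]
          linear_combination hR * hmd + E' * hid
        have hAth : (Araw.map σ) * h + g * (Braw.map σ) =
            QSaux.slice m (liftPS F n (liftTXZ F n P)) - rest := by
          have h11 := congrArg (Polynomial.map σ) hABraw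
          rw [Polynomial.map_add, Polynomial.map_mul, Polynomial.map_mul, hmapg, hmaph, hE'] at h11
          exact h11
        have hABE : QSaux.slice m QS * h + g * QSaux.slice m QSc =
            QSaux.slice m (liftPS F n (liftTXZ F n P)) - rest := by
          linear_combination -hkey2
        have hcopgh : IsCoprime g h := by
          refine ⟨vR.map σ, uR.map σ, ?_⟩
          have h12 := congrArg (Polynomial.map σ) hid
          rw [Polynomial.map_add, Polynomial.map_mul, Polynomial.map_mul, Polynomial.map_one,
            hmapg, hmaph] at h12
          exact h12
        have hfac : (QSaux.slice m QS - Araw.map σ) * h = g * ((Braw.map σ) - QSaux.slice m QSc) := by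
          linear_combination hABE - hAth
        have hdvdg : g ∣ (QSaux.slice m QS - Araw.map σ) :=
          hcopgh.dvd_of_dvd_mul_right (Dvd.intro _ hfac.symm)
        have hdegA : (QSaux.slice m QS - Araw.map σ).degree < g.degree := by
          have h6 : (QSaux.slice m QS).degree < (S.card : ℕ) := hsliceSdeg m hm
          have h7 : (Araw.map σ).degree < (S.card : ℕ) := by
            calc (Araw.map σ).degree ≤ Araw.degree := Polynomial.degree_map_le
            _ < gR.degree := Polynomial.degree_modByMonic_lt _ hgRmonic
            _ = (S.card : ℕ) := hgRdeg
          calc (QSaux.slice m QS - Araw.map σ).degree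
              ≤ max (QSaux.slice m QS).degree (Araw.map σ).degree :=
                Polynomial.degree_sub_le _ _
            _ < (S.card : ℕ) := max_lt h6 h7
            _ = g.degree := hgdeg.symm
        have hAeq : QSaux.slice m QS = Araw.map σ :=
          sub_eq_zero.mp (Polynomial.eq_zero_of_dvd_of_degree_lt hdvdg hdegA)
        have hBeq : QSaux.slice m QSc = Braw.map σ := by
          have h8 : g * QSaux.slice m QSc = g * (Braw.map σ) := by
            linear_combination hABE - hAth - h * hAeq
          exact mul_left_cancel₀ hgmonic.ne_zero h8
        exact ⟨(Polynomial.mem_lifts _).mpr ⟨Araw, hAeq.symm⟩,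
          (Polynomial.mem_lifts _).mpr ⟨Braw, hBeq.symm⟩⟩
  -- final assembly
  have hQSlift : truncPow k QS ∈ Polynomial.lifts (Polynomial.mapRingHom σ) := by
    refine (Polynomial.lifts_iff_coeff_lifts _).mpr fun j => ?_
    rw [coeff_truncPow]
    have h9 : PowerSeries.trunc k (QS.coeff j) ∈ Polynomial.lifts σ := by
      refine (Polynomial.lifts_iff_coeff_lifts _).mpr fun m => ?_
      rw [PowerSeries.coeff_trunc]
      split_ifs with hmk
      · have h13 := (Polynomial.lifts_iff_coeff_lifts _).mp (claim m).1 j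
        rw [coeff_slice] at h13
        exact h13
      · exact ⟨0, map_zero _⟩
    obtain ⟨q, hq⟩ := (Polynomial.mem_lifts _).mp h9
    exact ⟨q, hq⟩
  obtain ⟨Q', hQ'⟩ := (Polynomial.mem_lifts _).mp hQSlift
  refine ⟨Q', ?_⟩
  rw [liftTXZ, show (MvPolynomial.map (algebraMap F (AlgebraicClosure F))) = σ from rfl]
  exact hQ'
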